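/- For all positive reals a, c, the function x ↦ θ(x, x, c) has derivative 2·√c / ((c+a)·√(2·a + c)) at the point x = a. (This is the derivative formula ∂_a c_a^a computed in the proof of Lemma 2.2 of the paper, where both neighbor radii carry the same symbol a and are varied simultaneously.) -/

import Mathlib

/-- The tangency angle at the center of a sphere of radius `c` subtended by the
centers of spheres of radii `a` and `b`, all three pairwise tangent. -/
noncomputable def theta (a b c : ℝ) : ℝ :=
  Real.arccos (((c + a) ^ 2 + (c + b) ^ 2 - (a + b) ^ 2) / (2 * (c + a) * (c + b)))

theorem hasDerivAt_theta_both_neighbors (a c : ℝ) (ha : 0 < a) (hc : 0 < c) :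
    HasDerivAt (fun x => theta x x c)
      (2 * Real.sqrt c / ((c + a) * Real.sqrt (2 * a + c))) a := by
  have hca : (0:ℝ) < c + a := by linarith
  have hca' : (c + a) ≠ 0 := ne_of_gt hca
  set s := Real.sqrt c with hs
  set t := Real.sqrt (2 * a + c) with ht
  have hs2 : s ^ 2 = c := Real.sq_sqrt hc.le
  have ht2 : t ^ 2 = 2 * a + c := Real.sq_sqrt (by linarith)
  have hspos : 0 < s := Real.sqrt_pos.mpr hc
  have htpos : 0 < t := Real.sqrt_pos.mpr (by linarith)
  -- the inner function
  set g : ℝ → ℝ := fun x =>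
    ((c + x) ^ 2 + (c + x) ^ 2 - (x + x) ^ 2) / (2 * (c + x) * (c + x)) with hg
  have hx : HasDerivAt (fun x : ℝ => x) 1 a := hasDerivAt_id a
  have hcx : HasDerivAt (fun x => c + x) 1 a := hx.const_add c
  have hcx2 : HasDerivAt (fun x => (c + x) ^ 2) (2 * (c + a) ^ 1 * 1) a := hcx.pow 2
  have hN : HasDerivAt (fun x => (c + x) ^ 2 + (c + x) ^ 2 - (x + x) ^ 2)
      ((2 * (c + a) ^ 1 * 1 + 2 * (c + a) ^ 1 * 1) - 2 * (a + a) ^ 1 * (1 + 1)) a :=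
    (hcx2.add hcx2).sub ((hx.add hx).pow 2)
  have hD : HasDerivAt (fun x => 2 * (c + x) * (c + x))
      (2 * 1 * (c + a) + 2 * (c + a) * 1) a := (hcx.const_mul 2).mul hcx
  have hD0 : (2 * (c + a) * (c + a)) ≠ 0 := by positivity
  have hg' : HasDerivAt g (-(4 * a * c) / (c + a) ^ 3) a := by
    have := hN.div hD hD0
    refine this.congr_deriv ?_
    field_simp
    ring
  have hga : g a = ((c + a) ^ 2 + (c + a) ^ 2 - (a + a) ^ 2) / (2 * (c + a) * (c + a)) := rfl
  have h1m : 1 - g a = 2 * a ^ 2 / (c + a) ^ 2 := by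
    rw [hga]; field_simp; ring
  have h1p : 1 + g a = 2 * c * (2 * a + c) / (c + a) ^ 2 := by
    rw [hga]; field_simp; ring
  have hne1 : g a ≠ 1 := by
    have : 0 < 1 - g a := by rw [h1m]; positivity
    intro h; rw [h] at this; simp at this
  have hnem1 : g a ≠ -1 := by
    have : 0 < 1 + g a := by rw [h1p]; positivity
    intro h; rw [h] at this; simp at this
  have hsq : 1 - g a ^ 2 = (2 * a * s * t / (c + a) ^ 2) ^ 2 := by
    have : 1 - g a ^ 2 = (1 - g a) * (1 + g a) := by ring
    rw [this, h1m, h1p, div_pow]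
    have key : (2 * a * s * t) ^ 2 = 4 * a ^ 2 * s ^ 2 * t ^ 2 := by ring
    rw [key, hs2, ht2]
    field_simp
    ring
  have hsqrt : Real.sqrt (1 - g a ^ 2) = 2 * a * s * t / (c + a) ^ 2 := by
    rw [hsq, Real.sqrt_sq (by positivity)]
  have harc := (Real.hasDerivAt_arccos hnem1 hne1).comp a hg'
  have : HasDerivAt (fun x => theta x x c)
      (-(1 / Real.sqrt (1 - g a ^ 2)) * (-(4 * a * c) / (c + a) ^ 3)) a := by
    simpa [theta, Function.comp_def, g] using harc
  convert this using 1
  rw [hsqrt]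
  have hc' : c = s ^ 2 := hs2.symm
  rw [hc']
  field_simp
  ring
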